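/- arXiv:2310.18565 — 2 statements merged into one kernel-verified Lean document; each statement's English description precedes it below -/
import Mathlib

section
/- Let p ≥ 3 be prime, m = 6p² − 6p + 1, and A'' ∈ C^{m×p} with entries A''_{j,k} = exp(i 2π j g(k)/m), where g(k) = 2pk + (k²)_p. Let M ∈ C^{(m+p)×p} be the matrix obtained by stacking (2m)^{−1/4} A'' on top of 2^{−1/4} I_p. Then ||M x||_4 = ||x||_2 for all x ∈ C^p, i.e., M is an isometric embedding from l_2^p(C) into l_4^{m+p}(C). -/
lemma geomE (n : ℕ) (hn : 0 < n) (t : ℤ) :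
    ∑ j ∈ Finset.range n, Complex.exp (2 * (Real.pi:ℂ) * Complex.I * (j * t) / n) =
      if (n:ℤ) ∣ t then (n:ℂ) else 0 := by
  have hn0 : (n:ℂ) ≠ 0 := Nat.cast_ne_zero.mpr hn.ne'
  set r : ℂ := Complex.exp (2 * (Real.pi:ℂ) * Complex.I * t / n) with hr
  have hterm : ∀ j : ℕ, Complex.exp (2 * (Real.pi:ℂ) * Complex.I * (j * t) / n) = r ^ j := by
    intro j
    rw [hr, ← Complex.exp_nat_mul]
    congr 1
    ring
  have hrn : r ^ n = 1 := by
    rw [hr, ← Complex.exp_nat_mul]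
    have : (n:ℂ) * (2 * (Real.pi:ℂ) * Complex.I * t / n) = t * (2 * Real.pi * Complex.I) := by
      field_simp
    rw [this, Complex.exp_int_mul_two_pi_mul_I]
  simp only [hterm]
  by_cases hdvd : (n:ℤ) ∣ t
  · obtain ⟨s, hs⟩ := id hdvd
    have : r = 1 := by
      rw [hr, hs]
      have : 2 * (Real.pi:ℂ) * Complex.I * ((n:ℤ) * s : ℤ) / n = (s:ℤ) * (2 * Real.pi * Complex.I) := by
        push_cast
        field_simp
      rw [this, Complex.exp_int_mul_two_pi_mul_I]
    simp [this, hdvd]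
  · have hr1 : r ≠ 1 := by
      intro h
      rw [hr, Complex.exp_eq_one_iff] at h
      obtain ⟨s, hs⟩ := h
      apply hdvd
      refine ⟨s, ?_⟩
      have hpi : (Real.pi:ℂ) ≠ 0 := by exact_mod_cast Real.pi_ne_zero
      have hI := Complex.I_ne_zero
      field_simp at hs
      have : (t:ℂ) = (n:ℂ) * s := by
        apply mul_left_cancel₀ (mul_ne_zero (mul_ne_zero two_ne_zero hpi) hI)
        ring_nf
        ring_nf at hs
        linear_combination (2 * (Real.pi:ℂ) * Complex.I) * hs
      exact_mod_cast this
    rw [geom_sum_eq hr1, hrn]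
    simp [hdvd]

lemma small_even (p : ℕ) (hp0 : 0 < p) (hpo : p % 2 = 1) (z w : ℤ)
    (h : (p:ℤ) ∣ z) (hz : z = 2 * w) (hb : z < 2 * p) (hb' : -(2*(p:ℤ)) < z) : z = 0 := by
  obtain ⟨t, ht⟩ := h
  have hp0' : (0:ℤ) < p := by exact_mod_cast hp0
  have ht1 : t ≤ 1 := by nlinarith
  have ht2 : -1 ≤ t := by nlinarith
  interval_cases t
  · exfalso; omega
  · omega
  · exfalso; omega

lemma sidon (p : ℕ) (hp : p.Prime) (hp3 : 3 ≤ p) (k k' l l' : ℕ)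
    (hk : k < p) (hk' : k' < p) (hl : l < p) (hl' : l' < p)
    (h : 2*p*k + k^2 % p + (2*p*k' + k'^2 % p) = 2*p*l + l^2 % p + (2*p*l' + l'^2 % p)) :
    (k = l ∧ k' = l') ∨ (k = l' ∧ k' = l) := by
  have hp0 : 0 < p := hp.pos
  have hpo : p % 2 = 1 := Nat.odd_iff.mp (hp.odd_of_ne_two (by omega))
  have hrk : k^2 % p < p := Nat.mod_lt _ hp0
  have hrk' : k'^2 % p < p := Nat.mod_lt _ hp0
  have hrl : l^2 % p < p := Nat.mod_lt _ hp0
  have hrl' : l'^2 % p < p := Nat.mod_lt _ hp0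
  have key : 2*p*(k+k') + (k^2 % p + k'^2 % p) = 2*p*(l+l') + (l^2 % p + l'^2 % p) := by
    linarith [h]
  have h1 : k + k' = l + l' := by
    have e1 : (2*p*(k+k') + (k^2 % p + k'^2 % p)) / (2*p) = k + k' := by
      rw [Nat.mul_add_div (by omega), Nat.div_eq_of_lt (by omega)]; omega
    have e2 : (2*p*(l+l') + (l^2 % p + l'^2 % p)) / (2*p) = l + l' := by
      rw [Nat.mul_add_div (by omega), Nat.div_eq_of_lt (by omega)]; omega
    rw [← e1, key, e2]
  have h2 : k^2 % p + k'^2 % p = l^2 % p + l'^2 % p := by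
    rw [h1] at key; omega
  have hmod : ∀ n : ℕ, (p:ℤ) ∣ ((n:ℤ)^2 - ((n^2 % p : ℕ) : ℤ)) := by
    intro n
    refine ⟨(n^2 / p : ℕ), ?_⟩
    have h' : ((p:ℤ) * ((n^2/p : ℕ):ℤ)) + ((n^2 % p : ℕ):ℤ) = (n:ℤ)^2 := by
      exact_mod_cast Nat.div_add_mod (n^2) p
    linarith
  have dvd1 : (p:ℤ) ∣ ((k:ℤ)^2 + (k':ℤ)^2 - (l:ℤ)^2 - (l':ℤ)^2) := by
    have d1 := hmod k
    have d2 := hmod k'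
    have d3 := hmod l
    have d4 := hmod l'
    have h2' : ((k^2 % p : ℕ) : ℤ) + ((k'^2 % p : ℕ) : ℤ) = ((l^2 % p : ℕ) : ℤ) + ((l'^2 % p : ℕ) : ℤ) := by
      exact_mod_cast h2
    have : (k:ℤ)^2 + (k':ℤ)^2 - (l:ℤ)^2 - (l':ℤ)^2 =
        ((k:ℤ)^2 - ((k^2 % p : ℕ) : ℤ)) + ((k':ℤ)^2 - ((k'^2 % p : ℕ) : ℤ))
        - ((l:ℤ)^2 - ((l^2 % p : ℕ) : ℤ)) - ((l':ℤ)^2 - ((l'^2 % p : ℕ) : ℤ)) := by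
      linarith
    rw [this]
    exact dvd_sub (dvd_sub (dvd_add d1 d2) d3) d4
  set d : ℤ := (k:ℤ) - k' with hd
  set e : ℤ := (l:ℤ) - l' with he
  have hs : (k:ℤ) + k' = (l:ℤ) + l' := by exact_mod_cast h1
  have dvd2 : (p:ℤ) ∣ (d - e) * (d + e) := by
    have : (d - e) * (d + e) = 2 * ((k:ℤ)^2 + (k':ℤ)^2 - (l:ℤ)^2 - (l':ℤ)^2)
        - (((k:ℤ)+k') - ((l:ℤ)+l')) * (((k:ℤ)+k') + ((l:ℤ)+l')) := by ring
    rw [this, hs]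
    simpa using Dvd.dvd.mul_left dvd1 2
  have hpZ : Prime (p:ℤ) := Int.prime_iff_natAbs_prime.mpr (by simpa using hp)
  have hkb : (k:ℤ) < p := by exact_mod_cast hk
  have hkb' : (k':ℤ) < p := by exact_mod_cast hk'
  have hlb : (l:ℤ) < p := by exact_mod_cast hl
  have hlb' : (l':ℤ) < p := by exact_mod_cast hl'
  have hk0 : (0:ℤ) ≤ k := by positivity
  have hk0' : (0:ℤ) ≤ k' := by positivity
  have hl0 : (0:ℤ) ≤ l := by positivity
  have hl0' : (0:ℤ) ≤ l' := by positivity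
  rcases hpZ.dvd_mul.mp dvd2 with hcase | hcase
  · have hde : d - e = 0 := by
      apply small_even p hp0 hpo _ ((l':ℤ) - k') hcase
      · rw [hd, he]; push_cast; linarith [hs]
      · omega
      · omega
    left
    constructor <;> (zify; omega)
  · have hde : d + e = 0 := by
      apply small_even p hp0 hpo _ ((l':ℤ) - k' + e) hcase
      · rw [hd, he]; push_cast; linarith [hs]
      · omega
      · omega
    right
    constructor <;> (zify; omega)

/-- Stacking `(2m)^{-1/4} A''` on top of `2^{-1/4} I_p` gives an isometric embedding
from `ℓ₂^p(ℂ)` into `ℓ₄^{m+p}(ℂ)`. -/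
theorem stmt6 (p : ℕ) (hp : p.Prime) (hp3 : 3 ≤ p) (m : ℕ) (hm : m = 6 * p ^ 2 - 6 * p + 1)
    (A : Matrix (Fin m) (Fin p) ℂ)
    (hA : ∀ (j : Fin m) (k : Fin p),
      A j k = Complex.exp (2 * (Real.pi : ℂ) * Complex.I *
        ((j : ℕ) * (2 * p * (k : ℕ) + (k : ℕ) ^ 2 % p) : ℕ) / (m : ℕ)))
    (M : Matrix (Fin m ⊕ Fin p) (Fin p) ℂ)
    (hM₁ : ∀ (j : Fin m) (k : Fin p),
      M (Sum.inl j) k = (((2 * (m : ℝ)) ^ (-(1 : ℝ) / 4) : ℝ) : ℂ) * A j k)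
    (hM₂ : ∀ (i k : Fin p),
      M (Sum.inr i) k = if i = k then (((2 : ℝ) ^ (-(1 : ℝ) / 4) : ℝ) : ℂ) else 0)
    (x : Fin p → ℂ) :
    (∑ j, ‖M.mulVec x j‖ ^ 4) ^ ((1 : ℝ) / 4) = Real.sqrt (∑ k, ‖x k‖ ^ 2) := by
  have hm0 : 0 < m := by rw [hm]; exact Nat.succ_pos _
  have hp0 : 0 < p := hp.pos
  set g : Fin p → ℕ := fun k => 2*p*(k:ℕ) + (k:ℕ)^2 % p with hg
  set E : ℤ → ℂ := fun t => Complex.exp (2 * (Real.pi:ℂ) * Complex.I * t / m) with hE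
  have hEmul : ∀ a b : ℤ, E a * E b = E (a + b) := by
    intro a b
    rw [hE]
    simp only
    rw [← Complex.exp_add]
    congr 1
    push_cast
    ring
  have hEconj : ∀ t : ℤ, (starRingEnd ℂ) (E t) = E (-t) := by
    intro t
    rw [hE]
    simp only
    rw [← Complex.exp_conj]
    congr 1
    simp only [map_div₀, map_mul, map_ofNat, map_intCast, map_natCast, Complex.conj_I,
      Complex.conj_ofReal]
    push_cast
    ring
  set S : Fin m → ℂ := fun j => ∑ k, x k * E ((j:ℤ) * g k) with hS
  have hSconj : ∀ j, (starRingEnd ℂ) (S j) = ∑ l, (starRingEnd ℂ) (x l) * E (-((j:ℤ) * g l)) := by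
    intro j
    rw [hS]
    simp only [map_sum, map_mul]
    exact Finset.sum_congr rfl fun l _ => by rw [hEconj]
  set c : Fin p × Fin p → ℂ := fun q => x q.1 * (starRingEnd ℂ) (x q.2) with hc
  set t : Fin p × Fin p → ℤ := fun q => (g q.1 : ℤ) - g q.2 with ht
  have hT : ∀ j : Fin m, S j * (starRingEnd ℂ) (S j) = ∑ q : Fin p × Fin p, c q * E ((j:ℤ) * t q) := by
    intro j
    rw [hSconj j, hS]
    simp only
    rw [Finset.sum_mul_sum, Fintype.sum_prod_type]
    refine Finset.sum_congr rfl fun a _ => Finset.sum_congr rfl fun b _ => ?_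
    rw [mul_mul_mul_comm, hEmul, hc, ht]
    congr 2
    ring
  have hgeom : ∀ s : ℤ, ∑ j : Fin m, E ((j:ℤ) * s) = if (m:ℤ) ∣ s then (m:ℂ) else 0 := by
    intro s
    rw [Fin.sum_univ_eq_sum_range (fun j : ℕ => E ((j:ℤ) * s)) m, ← geomE m hm0 s]
    refine Finset.sum_congr rfl fun j _ => ?_
    simp only [hE]
    congr 1
    push_cast
    ring
  -- the divisibility condition characterization via the Sidon property
  have hmZ : (m:ℤ) = 6*(p:ℤ)^2 - 6*p + 1 := by
    have h6 : 6*p ≤ 6*p^2 := by nlinarith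
    rw [hm]
    push_cast [Nat.cast_sub h6]
    ring
  have hgub : ∀ i : Fin p, (g i : ℤ) ≤ 2*(p:ℤ)*(p-1) + (p-1) := by
    intro i
    have h1 : (i:ℕ) ≤ p - 1 := Nat.le_pred_of_lt i.isLt
    have h2 : (i:ℕ)^2 % p ≤ p - 1 := Nat.le_pred_of_lt (Nat.mod_lt _ hp0)
    have : g i ≤ 2*p*(p-1) + (p-1) :=
      Nat.add_le_add (Nat.mul_le_mul_left _ h1) h2
    have hcast : ((p - 1 : ℕ) : ℤ) = (p:ℤ) - 1 := by
      have : 1 ≤ p := hp0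
      push_cast [Nat.cast_sub this]
      ring
    calc (g i : ℤ) ≤ ((2*p*(p-1) + (p-1) : ℕ) : ℤ) := by exact_mod_cast this
      _ = 2*(p:ℤ)*(p-1) + (p-1) := by push_cast [hcast]; ring
  have hcond : ∀ q r : Fin p × Fin p, ((m:ℤ) ∣ (t q + t r)) ↔
      ((q.1 = q.2 ∧ r.1 = r.2) ∨ r = q.swap) := by
    intro q r
    constructor
    · intro hdvd
      have hzero : t q + t r = 0 := by
        obtain ⟨s, hsv⟩ := hdvd
        have hub1 := hgub q.1
        have hub2 := hgub r.1
        have hlb1 : (0:ℤ) ≤ g q.2 := Int.natCast_nonneg _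
        have hlb2 : (0:ℤ) ≤ g r.2 := Int.natCast_nonneg _
        have hub1' := hgub q.2
        have hub2' := hgub r.2
        have hlb1' : (0:ℤ) ≤ g q.1 := Int.natCast_nonneg _
        have hlb2' : (0:ℤ) ≤ g r.1 := Int.natCast_nonneg _
        have hpZ3 : (3:ℤ) ≤ p := by exact_mod_cast hp3
        have htq : t q + t r = (g q.1 : ℤ) + g r.1 - g q.2 - g r.2 := by
          rw [ht]; ring
        have hub : t q + t r < m := by rw [htq, hmZ]; nlinarith
        have hlb : -(m:ℤ) < t q + t r := by rw [htq, hmZ]; nlinarith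
        have hmZ0 : (0:ℤ) < m := by exact_mod_cast hm0
        rw [hsv] at hub hlb
        have hs1 : s < 1 := lt_of_mul_lt_mul_left (by linarith) hmZ0.le
        have hs2 : -1 < s := lt_of_mul_lt_mul_left (by linarith) hmZ0.le
        have : s = 0 := by omega
        rw [hsv, this, mul_zero]
      have hNat : g q.1 + g r.1 = g q.2 + g r.2 := by
        have : ((g q.1 + g r.1 : ℕ) : ℤ) = ((g q.2 + g r.2 : ℕ) : ℤ) := by
          rw [ht] at hzero
          simp only at hzero
          push_cast
          linarith [hzero]
        exact_mod_cast this
      have := sidon p hp hp3 (q.1 : ℕ) (r.1 : ℕ) (q.2 : ℕ) (r.2 : ℕ)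
        q.1.isLt r.1.isLt q.2.isLt r.2.isLt (by simpa [hg] using hNat)
      rcases this with ⟨e1, e2⟩ | ⟨e1, e2⟩
      · exact Or.inl ⟨Fin.ext e1, Fin.ext e2⟩
      · refine Or.inr (Prod.ext ?_ ?_)
        · simp only [Prod.fst_swap]
          exact Fin.ext e2
        · simp only [Prod.snd_swap]
          exact (Fin.ext e1).symm
    · rintro (⟨h1, h2⟩ | rfl)
      · have : t q + t r = 0 := by
          rw [ht]
          simp only
          rw [h1, h2]
          ring
        rw [this]
        exact dvd_zero _
      · have : t q + t q.swap = 0 := by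
          rw [ht]
          simp only [Prod.fst_swap, Prod.snd_swap]
          ring
        rw [this]
        exact dvd_zero _
  set N : Fin p → ℂ := fun i => (Complex.normSq (x i) : ℂ) with hN
  have hcN : ∀ i : Fin p, c (i, i) = N i := by
    intro i
    rw [hc, hN]
    simp only
    rw [Complex.mul_conj]
  have hsum : ∑ j : Fin m, (S j * (starRingEnd ℂ) (S j))^2 =
      ∑ q : Fin p × Fin p, ∑ r : Fin p × Fin p,
        (c q * c r) * (if (m:ℤ) ∣ (t q + t r) then (m:ℂ) else 0) := by
    calc ∑ j : Fin m, (S j * (starRingEnd ℂ) (S j))^2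
        = ∑ j : Fin m, ∑ q : Fin p × Fin p, ∑ r : Fin p × Fin p,
            (c q * c r) * E ((j:ℤ) * (t q + t r)) := by
          refine Finset.sum_congr rfl fun j _ => ?_
          rw [hT j, sq, Finset.sum_mul_sum]
          refine Finset.sum_congr rfl fun q _ => Finset.sum_congr rfl fun r _ => ?_
          rw [mul_mul_mul_comm, hEmul]
          congr 2
          ring
      _ = ∑ q : Fin p × Fin p, ∑ r : Fin p × Fin p, ∑ j : Fin m,
            (c q * c r) * E ((j:ℤ) * (t q + t r)) := by
          rw [Finset.sum_comm]
          exact Finset.sum_congr rfl fun q _ => Finset.sum_comm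
      _ = _ := by
          refine Finset.sum_congr rfl fun q _ => Finset.sum_congr rfl fun r _ => ?_
          rw [← Finset.mul_sum, hgeom]
  have heval : ∀ q : Fin p × Fin p,
      (∑ r : Fin p × Fin p, (c q * c r) * (if (m:ℤ) ∣ (t q + t r) then (m:ℂ) else 0)) =
        (m:ℂ) * (N q.1 * N q.2) +
          (if q.1 = q.2 then (m:ℂ) * N q.1 * ((∑ i, N i) - N q.1) else 0) := by
    intro q
    by_cases hq : q.1 = q.2
    · have hco : ∀ r : Fin p × Fin p, ((m:ℤ) ∣ (t q + t r)) ↔ r.1 = r.2 := by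
        intro r
        rw [hcond]
        constructor
        · rintro (⟨_, h⟩ | rfl)
          · exact h
          · exact hq.symm
        · intro h
          exact Or.inl ⟨hq, h⟩
      simp only [hco]
      have hcq : c q = N q.1 := by
        rw [hc, hN]
        simp only
        rw [← hq, Complex.mul_conj]
      rw [Fintype.sum_prod_type]
      have : ∀ a : Fin p, (∑ b : Fin p, (c q * c (a, b)) * (if (a:Fin p) = b then (m:ℂ) else 0))
          = c q * N a * m := by
        intro a
        rw [Finset.sum_eq_single a]
        · rw [hcN, if_pos rfl]
        · intro b _ hb
          rw [if_neg (Ne.symm hb), mul_zero]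
        · intro h
          exact absurd (Finset.mem_univ a) h
      simp only [this]
      rw [← Finset.sum_mul, ← Finset.mul_sum, if_pos hq, hcq, ← hq]
      ring
    · have hco : ∀ r : Fin p × Fin p, ((m:ℤ) ∣ (t q + t r)) ↔ r = q.swap := by
        intro r
        rw [hcond]
        constructor
        · rintro (⟨h, _⟩ | h)
          · exact absurd h hq
          · exact h
        · exact Or.inr
      simp only [hco]
      rw [Finset.sum_eq_single q.swap]
      · rw [if_pos rfl, if_neg hq, add_zero]
        have h5 : c q * c q.swap = (x q.1 * (starRingEnd ℂ) (x q.1)) * (x q.2 * (starRingEnd ℂ) (x q.2)) := by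
          rw [hc]
          simp only [Prod.fst_swap, Prod.snd_swap]
          ring
        rw [h5, Complex.mul_conj, Complex.mul_conj, hN]
        ring
      · intro r _ hr
        rw [if_neg hr, mul_zero]
      · intro h
        exact absurd (Finset.mem_univ _) h
  have htotal : ∑ j : Fin m, (S j * (starRingEnd ℂ) (S j))^2 =
      (m:ℂ) * (2 * (∑ i, N i)^2 - ∑ i, (N i)^2) := by
    rw [hsum]
    simp only [heval]
    rw [Finset.sum_add_distrib]
    have h1 : ∑ q : Fin p × Fin p, (m:ℂ) * (N q.1 * N q.2) = (m:ℂ) * (∑ i, N i)^2 := by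
      rw [← Finset.mul_sum]
      congr 1
      rw [sq, Finset.sum_mul_sum, Fintype.sum_prod_type]
    have h2 : ∑ q : Fin p × Fin p, (if q.1 = q.2 then (m:ℂ) * N q.1 * ((∑ i, N i) - N q.1) else 0)
        = (m:ℂ) * ((∑ i, N i)^2 - ∑ i, (N i)^2) := by
      rw [Fintype.sum_prod_type]
      have : ∀ a : Fin p, (∑ b : Fin p, if (a : Fin p) = b then (m:ℂ) * N a * ((∑ i, N i) - N a) else 0)
          = (m:ℂ) * N a * ((∑ i, N i) - N a) := by
        intro a
        rw [Finset.sum_eq_single a]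
        · rw [if_pos rfl]
        · intro b _ hb
          rw [if_neg (Ne.symm hb)]
        · intro h
          exact absurd (Finset.mem_univ a) h
      simp only [this]
      calc ∑ a : Fin p, (m:ℂ) * N a * ((∑ i, N i) - N a)
          = ∑ a : Fin p, (((m:ℂ) * (∑ i, N i)) * N a - (m:ℂ) * (N a)^2) := by
            refine Finset.sum_congr rfl fun a _ => by ring
        _ = ((m:ℂ) * (∑ i, N i)) * (∑ a, N a) - (m:ℂ) * (∑ a, (N a)^2) := by
            rw [Finset.sum_sub_distrib, ← Finset.mul_sum, ← Finset.mul_sum]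
        _ = (m:ℂ) * ((∑ i, N i)^2 - ∑ i, (N i)^2) := by ring
    rw [h1, h2]
    ring
  -- relate to real quantities
  have hreal : ∑ j : Fin m, ‖S j‖^4 = (m:ℝ) * (2 * (∑ k, ‖x k‖^2)^2 - ∑ k, ‖x k‖^4) := by
    have habs : ∀ z : ℂ, ((‖z‖^4 : ℝ) : ℂ) = (z * (starRingEnd ℂ) z)^2 := by
      intro z
      rw [Complex.mul_conj, ← Complex.ofReal_pow]
      congr 1
      rw [Complex.normSq_eq_norm_sq]
      ring
    have hN2 : ∀ i : Fin p, N i = ((‖x i‖^2 : ℝ) : ℂ) := by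
      intro i
      rw [hN]
      simp only
      rw [Complex.normSq_eq_norm_sq]
    apply Complex.ofReal_injective
    calc ((∑ j : Fin m, ‖S j‖^4 : ℝ) : ℂ)
        = ∑ j : Fin m, (S j * (starRingEnd ℂ) (S j))^2 := by
          push_cast
          exact Finset.sum_congr rfl fun j _ => by rw [← habs]; push_cast; ring
      _ = (m:ℂ) * (2 * (∑ i, N i)^2 - ∑ i, (N i)^2) := htotal
      _ = (((m:ℝ) * (2 * (∑ k, ‖x k‖^2)^2 - ∑ k, ‖x k‖^4) : ℝ) : ℂ) := by
          simp only [hN2]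
          push_cast
          simp only [show ∀ a:ℂ, (a^2)^2 = a^4 from fun a => by ring]
  -- compute mulVec entries
  have hAE : ∀ (j : Fin m) (k : Fin p), A j k = E ((j:ℤ) * g k) := by
    intro j k
    rw [hA, hE]
    simp only [hg]
    congr 1
  set c1 : ℝ := (2*(m:ℝ)) ^ (-(1:ℝ)/4) with hc1
  set c2 : ℝ := (2:ℝ) ^ (-(1:ℝ)/4) with hc2
  have hMl : ∀ j : Fin m, M.mulVec x (Sum.inl j) = (c1:ℂ) * S j := by
    intro j
    show ∑ k, M (Sum.inl j) k * x k = _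
    rw [hS]
    simp only
    rw [Finset.mul_sum]
    refine Finset.sum_congr rfl fun k _ => ?_
    rw [hM₁, hAE]
    ring
  have hMr : ∀ i : Fin p, M.mulVec x (Sum.inr i) = (c2:ℂ) * x i := by
    intro i
    show ∑ k, M (Sum.inr i) k * x k = _
    simp only [hM₂]
    rw [Finset.sum_eq_single i]
    · rw [if_pos rfl]
    · intro b _ hb
      rw [if_neg (Ne.symm hb), zero_mul]
    · intro h
      exact absurd (Finset.mem_univ i) h
  have h2m : (0:ℝ) < 2*(m:ℝ) := by positivity
  have hc1nn : 0 ≤ c1 := Real.rpow_nonneg h2m.le _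
  have hc2nn : 0 ≤ c2 := Real.rpow_nonneg (by norm_num) _
  have hc14 : c1^4 = (2*(m:ℝ))⁻¹ := by
    rw [hc1, ← Real.rpow_natCast _ 4, ← Real.rpow_mul h2m.le]
    norm_num [Real.rpow_neg_one]
  have hc24 : c2^4 = (2:ℝ)⁻¹ := by
    rw [hc2, ← Real.rpow_natCast _ 4, ← Real.rpow_mul (by norm_num : (0:ℝ) ≤ 2)]
    norm_num [Real.rpow_neg_one]
  have hnorm1 : ∀ j : Fin m, ‖M.mulVec x (Sum.inl j)‖^4 = (2*(m:ℝ))⁻¹ * ‖S j‖^4 := by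
    intro j
    rw [hMl j, norm_mul, Complex.norm_real, Real.norm_of_nonneg hc1nn, mul_pow, hc14]
  have hnorm2 : ∀ i : Fin p, ‖M.mulVec x (Sum.inr i)‖^4 = (2:ℝ)⁻¹ * ‖x i‖^4 := by
    intro i
    rw [hMr i, norm_mul, Complex.norm_real, Real.norm_of_nonneg hc2nn, mul_pow, hc24]
  have hmain : ∑ j, ‖M.mulVec x j‖ ^ 4 = (∑ k, ‖x k‖^2)^2 := by
    rw [Fintype.sum_sum_type]
    simp only [hnorm1, hnorm2]
    rw [← Finset.mul_sum, ← Finset.mul_sum, hreal]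
    have hmne : (m:ℝ) ≠ 0 := Nat.cast_ne_zero.mpr hm0.ne'
    field_simp
    ring
  rw [hmain]
  have hnn : 0 ≤ ∑ k, ‖x k‖^2 := Finset.sum_nonneg fun k _ => by positivity
  rw [← Real.rpow_natCast (∑ k, ‖x k‖^2) 2, ← Real.rpow_mul hnn]
  rw [Real.sqrt_eq_rpow]
  norm_num
end

section
/- Suppose there exist unit vectors x_1, ..., x_N in l_2^n(K) and weights τ_1, ..., τ_N ≥ 0 summing to 1 such that ||∑_{i=1}^N τ_i ⊗^k(x_i ⊗ conj(x_i)) − D||_2 ≤ ε, where D = ∫_S ⊗^k(y ⊗ conj(y)) dσ(y) and δ = ∫_S |⟨x,y⟩|^{2k} dσ(y) for any unit x. Then the matrix A ∈ K^{N×n} with rows a_i^* where a_i = (τ_i/δ)^{1/(2k)} x_i satisfies (1 − ε/δ) ||x||_2^{2k} ≤ ||Ax||_{2k}^{2k} ≤ (1 + ε/δ) ||x||_2^{2k} for all x ∈ K^n. -/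
open MeasureTheory

/-- The `k`-fold tensor power of the rank-one tensor `x ⊗ conj x`. -/
noncomputable def tensPow {𝕜 : Type} [RCLike 𝕜] (n k : ℕ)
    (x : EuclideanSpace 𝕜 (Fin n)) : (Fin k → Fin n × Fin n) → 𝕜 :=
  fun f => ∏ t, x ((f t).1) * (starRingEnd 𝕜) (x ((f t).2))

/-- The standard inner product on the tensor space. -/
noncomputable def tensInner {𝕜 : Type} [RCLike 𝕜] (n k : ℕ)
    (S T : (Fin k → Fin n × Fin n) → 𝕜) : 𝕜 :=
  ∑ f, (starRingEnd 𝕜) (S f) * T f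

lemma tensInner_tensPow {𝕜 : Type} [RCLike 𝕜] (n k : ℕ) (u v : EuclideanSpace 𝕜 (Fin n)) :
    tensInner n k (tensPow n k u) (tensPow n k v)
      = ((‖(inner 𝕜 u v : 𝕜)‖ ^ (2 * k) : ℝ) : 𝕜) := by
  unfold tensInner tensPow
  have h1 : ∀ f : Fin k → Fin n × Fin n,
      (starRingEnd 𝕜) (∏ t, u ((f t).1) * (starRingEnd 𝕜) (u ((f t).2))) *
        (∏ t, v ((f t).1) * (starRingEnd 𝕜) (v ((f t).2)))
      = ∏ t, (((starRingEnd 𝕜) (u ((f t).1)) * v ((f t).1)) *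
          (u ((f t).2) * (starRingEnd 𝕜) (v ((f t).2)))) := by
    intro f
    rw [map_prod, ← Finset.prod_mul_distrib]
    refine Finset.prod_congr rfl fun t _ => ?_
    simp only [map_mul, RCLike.conj_conj, RingHom.id_apply]
    ring
  simp only [h1]
  rw [← Fintype.sum_pow (fun p : Fin n × Fin n =>
      ((starRingEnd 𝕜) (u p.1) * v p.1) * (u p.2 * (starRingEnd 𝕜) (v p.2))) k]
  have h2 : (∑ p : Fin n × Fin n, ((starRingEnd 𝕜) (u p.1) * v p.1) * (u p.2 * (starRingEnd 𝕜) (v p.2)))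
      = (inner 𝕜 u v : 𝕜) * (starRingEnd 𝕜) (inner 𝕜 u v : 𝕜) := by
    rw [Fintype.sum_prod_type]
    have hin : (inner 𝕜 u v : 𝕜) = ∑ i, (starRingEnd 𝕜) (u i) * v i := by
      rw [PiLp.inner_apply]; exact Finset.sum_congr rfl fun i _ => (((RCLike.inner_apply _ _).trans (mul_comm _ _)))
    rw [hin, map_sum, Finset.sum_mul_sum]
    refine Finset.sum_congr rfl fun i _ => Finset.sum_congr rfl fun j _ => ?_
    simp only [map_mul, RCLike.conj_conj, RingHom.id_apply]
    try ring
  rw [h2, RCLike.mul_conj, ← pow_mul]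
  norm_cast

lemma coord_le_norm {𝕜 : Type} [RCLike 𝕜] {n : ℕ} (y : EuclideanSpace 𝕜 (Fin n)) (i : Fin n) :
    ‖y i‖ ≤ ‖y‖ := by
  rw [EuclideanSpace.norm_eq]
  calc ‖y i‖ = Real.sqrt (‖y i‖ ^ 2) := (Real.sqrt_sq (norm_nonneg _)).symm
  _ ≤ _ := Real.sqrt_le_sqrt (Finset.single_le_sum (f := fun j => ‖y j‖ ^ 2)
      (fun j _ => sq_nonneg _) (Finset.mem_univ i))

lemma tensPow_integrable {𝕜 : Type} [RCLike 𝕜] (n k : ℕ)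
    [MeasurableSpace (EuclideanSpace 𝕜 (Fin n))] [BorelSpace (EuclideanSpace 𝕜 (Fin n))]
    (σ : Measure (EuclideanSpace 𝕜 (Fin n))) [IsProbabilityMeasure σ]
    (hσ : ∀ᵐ y ∂σ, ‖y‖ = 1) (f : Fin k → Fin n × Fin n) :
    Integrable (fun y : EuclideanSpace 𝕜 (Fin n) => tensPow n k y f) σ := by
  have hcont : Continuous fun y : EuclideanSpace 𝕜 (Fin n) => tensPow n k y f := by
    unfold tensPow
    exact continuous_finset_prod _ fun t _ =>
      ((EuclideanSpace.proj (f t).1).continuous).mul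
        (continuous_star.comp (EuclideanSpace.proj (f t).2).continuous)
  refine Integrable.mono' (integrable_const 1) hcont.aestronglyMeasurable ?_
  filter_upwards [hσ] with y hy
  unfold tensPow
  rw [norm_prod]
  calc ∏ t, ‖y ((f t).1) * (starRingEnd 𝕜) (y ((f t).2))‖
      ≤ ∏ t : Fin k, 1 := by
        refine Finset.prod_le_prod (fun t _ => norm_nonneg _) fun t _ => ?_
        rw [norm_mul, RCLike.norm_conj]
        calc ‖y ((f t).1)‖ * ‖y ((f t).2)‖ ≤ ‖y‖ * ‖y‖ :=
          mul_le_mul (coord_le_norm y _) (coord_le_norm y _) (norm_nonneg _) (norm_nonneg _)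
        _ = 1 := by rw [hy]; ring
  _ = 1 := by simp

lemma tensInner_eq_inner {𝕜 : Type} [RCLike 𝕜] (n k : ℕ)
    (S T : (Fin k → Fin n × Fin n) → 𝕜) :
    tensInner n k S T = (inner 𝕜 ((WithLp.equiv 2 _).symm S : EuclideanSpace 𝕜 (Fin k → Fin n × Fin n))
      ((WithLp.equiv 2 _).symm T) : 𝕜) := by
  rw [PiLp.inner_apply]
  exact Finset.sum_congr rfl fun f _ => ((RCLike.inner_apply _ _).trans (mul_comm _ _)).symm

/-- If `‖∑ᵢ τᵢ ⊗^k(xᵢ ⊗ x̄ᵢ) − D‖₂ ≤ ε`, then the matrix with rows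
`aᵢ* = ((τᵢ/δ)^{1/(2k)} xᵢ)*` is an almost isometric `ℓ₂ → ℓ_{2k}` embedding:
`(1 − ε/δ)‖x‖^{2k} ≤ ∑ᵢ |⟨aᵢ,x⟩|^{2k} ≤ (1 + ε/δ)‖x‖^{2k}`. -/
theorem stmt15 {𝕜 : Type} [RCLike 𝕜] (n k N : ℕ) (hk : 1 ≤ k)
    [MeasurableSpace (EuclideanSpace 𝕜 (Fin n))] [BorelSpace (EuclideanSpace 𝕜 (Fin n))]
    (σ : Measure (EuclideanSpace 𝕜 (Fin n))) [IsProbabilityMeasure σ]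
    (hσ : ∀ᵐ y ∂σ, ‖y‖ = 1) (δ : ℝ) (hδpos : 0 < δ)
    (hδ : ∀ x : EuclideanSpace 𝕜 (Fin n), ‖x‖ = 1 →
      ∫ y, ‖(inner 𝕜 x y : 𝕜)‖ ^ (2 * k) ∂σ = δ)
    (D : (Fin k → Fin n × Fin n) → 𝕜)
    (hD : ∀ f, D f = ∫ y, tensPow n k y f ∂σ)
    (x : Fin N → EuclideanSpace 𝕜 (Fin n)) (hx : ∀ i, ‖x i‖ = 1)
    (τ : Fin N → ℝ) (hτ : ∀ i, 0 ≤ τ i) (hτ1 : ∑ i, τ i = 1)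
    (ε : ℝ) (hε : 0 ≤ ε)
    (happrox : RCLike.re (tensInner n k
        (fun f => (∑ i, (τ i : 𝕜) * tensPow n k (x i) f) - D f)
        (fun f => (∑ i, (τ i : 𝕜) * tensPow n k (x i) f) - D f)) ≤ ε ^ 2)
    (a : Fin N → EuclideanSpace 𝕜 (Fin n))
    (ha : ∀ i, a i = (((τ i / δ) ^ ((1 : ℝ) / (2 * k)) : ℝ) : 𝕜) • x i) :
    ∀ z : EuclideanSpace 𝕜 (Fin n),
      (1 - ε / δ) * ‖z‖ ^ (2 * k) ≤ ∑ i, ‖(inner 𝕜 (a i) z : 𝕜)‖ ^ (2 * k) ∧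
      ∑ i, ‖(inner 𝕜 (a i) z : 𝕜)‖ ^ (2 * k) ≤ (1 + ε / δ) * ‖z‖ ^ (2 * k) := by
  intro z
  have hk2 : (2 * k : ℕ) ≠ 0 := by omega
  by_cases hz : z = 0
  · subst hz
    constructor <;>
      simp [inner_zero_right, norm_zero, zero_pow hk2]
  -- nonzero case
  have hznorm : 0 < ‖z‖ := norm_pos_iff.mpr hz
  set c2k : ℝ := ‖z‖ ^ (2 * k) with hc2k
  have hc2knn : 0 ≤ c2k := by positivity
  -- unit vector in direction z
  set zh : EuclideanSpace 𝕜 (Fin n) := ((‖z‖⁻¹ : ℝ) : 𝕜) • z with hzh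
  have hzh1 : ‖zh‖ = 1 := by
    rw [hzh, norm_smul, RCLike.norm_ofReal, abs_inv, abs_norm, inv_mul_cancel₀ hznorm.ne']
  have hin : ∀ y : EuclideanSpace 𝕜 (Fin n),
      ‖(inner 𝕜 y z : 𝕜)‖ ^ (2 * k) = c2k * ‖(inner 𝕜 zh y : 𝕜)‖ ^ (2 * k) := by
    intro y
    have h1 : ‖(inner 𝕜 zh y : 𝕜)‖ = ‖z‖⁻¹ * ‖(inner 𝕜 y z : 𝕜)‖ := by
      rw [hzh, inner_smul_left, norm_mul, RCLike.conj_ofReal, RCLike.norm_ofReal,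
        abs_inv, abs_norm, norm_inner_symm]
    rw [h1, mul_pow, hc2k, ← mul_assoc, inv_pow, mul_inv_cancel₀ (pow_ne_zero _ hznorm.ne'),
      one_mul]
  have hδz : ∫ y, ‖(inner 𝕜 y z : 𝕜)‖ ^ (2 * k) ∂σ = δ * c2k := by
    simp_rw [hin]
    rw [integral_const_mul, hδ zh hzh1]
    ring
  -- tensor quantities
  set P : (Fin k → Fin n × Fin n) → 𝕜 := tensPow n k z with hP
  set Sr : ℝ := ∑ i, τ i * ‖(inner 𝕜 (x i) z : 𝕜)‖ ^ (2 * k) with hSr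
  have hA : tensInner n k (fun f => ∑ i, (τ i : 𝕜) * tensPow n k (x i) f) P
      = ((Sr : ℝ) : 𝕜) := by
    have e1 : tensInner n k (fun f => ∑ i, (τ i : 𝕜) * tensPow n k (x i) f) P
        = ∑ i, (τ i : 𝕜) * tensInner n k (tensPow n k (x i)) P := by
      unfold tensInner
      simp only [map_sum, map_mul, RCLike.conj_ofReal, Finset.sum_mul, mul_assoc,
        Finset.mul_sum]
      exact Finset.sum_comm
    rw [e1, hSr]
    push_cast
    refine Finset.sum_congr rfl fun i _ => ?_
    rw [hP, tensInner_tensPow]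
    push_cast
    ring
  have hB : tensInner n k D P = ((δ * c2k : ℝ) : 𝕜) := by
    unfold tensInner
    have h1 : ∀ f, (starRingEnd 𝕜) (D f) * P f
        = ∫ y, (starRingEnd 𝕜) (tensPow n k y f) * P f ∂σ := by
      intro f
      rw [hD f, ← integral_conj, ← integral_mul_const]
    simp only [h1]
    have hconj : ∀ (f : Fin k → Fin n × Fin n) (y : EuclideanSpace 𝕜 (Fin n)),
        (starRingEnd 𝕜) (tensPow n k y f)
          = tensPow n k y (fun t => ((f t).2, (f t).1)) := by
      intro f y
      unfold tensPow
      rw [map_prod]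
      refine Finset.prod_congr rfl fun t _ => ?_
      simp only [map_mul, RCLike.conj_conj, RingHom.id_apply]
      ring
    rw [← integral_finset_sum _ (fun f _ => by
      simp only [hconj]
      exact (tensPow_integrable n k σ hσ (fun t => ((f t).2, (f t).1))).mul_const (P f))]
    have h2 : ∀ y : EuclideanSpace 𝕜 (Fin n),
        (∑ f, (starRingEnd 𝕜) (tensPow n k y f) * P f)
          = ((‖(inner 𝕜 y z : 𝕜)‖ ^ (2 * k) : ℝ) : 𝕜) := by
      intro y
      rw [hP]
      exact tensInner_tensPow n k y z
    simp_rw [h2]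
    rw [integral_ofReal, hδz]
  -- the deviation tensor
  set Δ : (Fin k → Fin n × Fin n) → 𝕜 :=
    fun f => (∑ i, (τ i : 𝕜) * tensPow n k (x i) f) - D f with hΔdef
  have hΔP : tensInner n k Δ P = ((Sr - δ * c2k : ℝ) : 𝕜) := by
    have e1 : tensInner n k Δ P
        = tensInner n k (fun f => ∑ i, (τ i : 𝕜) * tensPow n k (x i) f) P
          - tensInner n k D P := by
      unfold tensInner
      simp only [hΔdef, map_sub, sub_mul, Finset.sum_sub_distrib]
    rw [e1, hA, hB]
    push_cast
    ring
  -- Cauchy-Schwarz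
  set E := EuclideanSpace 𝕜 (Fin k → Fin n × Fin n)
  set Δ' : E := (WithLp.equiv 2 _).symm Δ with hΔ'
  set P' : E := (WithLp.equiv 2 _).symm P with hP'
  have hΔn : ‖Δ'‖ ≤ ε := by
    have h1 : ‖Δ'‖ ^ 2 ≤ ε ^ 2 := by
      rw [← inner_self_eq_norm_sq (𝕜 := 𝕜) Δ']
      rw [hΔ', ← tensInner_eq_inner]
      exact happrox
    calc ‖Δ'‖ = Real.sqrt (‖Δ'‖ ^ 2) := (Real.sqrt_sq (norm_nonneg _)).symm
    _ ≤ Real.sqrt (ε ^ 2) := Real.sqrt_le_sqrt h1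
    _ = ε := Real.sqrt_sq hε
  have hPn : ‖P'‖ = c2k := by
    have hP2 : ‖P'‖ ^ 2 = c2k ^ 2 := by
      rw [← inner_self_eq_norm_sq (𝕜 := 𝕜) P', hP', ← tensInner_eq_inner, hP,
        tensInner_tensPow, RCLike.ofReal_re, inner_self_eq_norm_sq_to_K, norm_pow,
        RCLike.norm_ofReal, abs_norm, hc2k]
      ring
    calc ‖P'‖ = Real.sqrt (‖P'‖ ^ 2) := (Real.sqrt_sq (norm_nonneg _)).symm
    _ = Real.sqrt (c2k ^ 2) := by rw [hP2]
    _ = c2k := Real.sqrt_sq hc2knn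
  have hkey : |Sr - δ * c2k| ≤ ε * c2k := by
    have h1 : ‖tensInner n k Δ P‖ ≤ ε * c2k := by
      rw [tensInner_eq_inner, ← hΔ', ← hP']
      calc ‖(inner 𝕜 Δ' P' : 𝕜)‖ ≤ ‖Δ'‖ * ‖P'‖ := norm_inner_le_norm _ _
      _ ≤ ε * c2k := by
          rw [hPn]
          exact mul_le_mul_of_nonneg_right hΔn hc2knn
    rw [hΔP, RCLike.norm_ofReal] at h1
    exact h1
  -- the sum identity
  have hkR : ((2 : ℝ) * k) ≠ 0 := by
    have : (k : ℝ) ≠ 0 := Nat.cast_ne_zero.mpr (by omega)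
    positivity
  have hsum : ∑ i, ‖(inner 𝕜 (a i) z : 𝕜)‖ ^ (2 * k) = Sr / δ := by
    rw [hSr, Finset.sum_div]
    refine Finset.sum_congr rfl fun i _ => ?_
    rw [ha i, inner_smul_left, RCLike.conj_ofReal, norm_mul, RCLike.norm_ofReal,
      abs_of_nonneg (Real.rpow_nonneg (div_nonneg (hτ i) hδpos.le) _), mul_pow]
    have hc : ((τ i / δ) ^ ((1 : ℝ) / (2 * k))) ^ (2 * k) = τ i / δ := by
      rw [← Real.rpow_natCast ((τ i / δ) ^ ((1 : ℝ) / (2 * (k : ℝ)))) (2 * k),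
        ← Real.rpow_mul (div_nonneg (hτ i) hδpos.le)]
      rw [show ((1 : ℝ) / (2 * (k : ℝ))) * ((2 * k : ℕ) : ℝ) = 1 by
        push_cast; field_simp]
      exact Real.rpow_one _
    rw [hc]
    ring
  rw [hsum]
  have habs := abs_le.mp hkey
  constructor
  · have e : (1 - ε / δ) * c2k = (δ * c2k - ε * c2k) / δ := by field_simp
    rw [e, div_le_div_iff_of_pos_right hδpos]
    linarith [habs.1]
  · have e : (1 + ε / δ) * c2k = (δ * c2k + ε * c2k) / δ := by field_simp
    rw [e, div_le_div_iff_of_pos_right hδpos]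
    linarith [habs.2]
end
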